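/- Let d ≥ 1, M ≥ 1 be integers and R > 0. There exists a constant C_R, depending only on R, M and d, such that for every family f = (f_1,…,f_M) of functions in L²(ℝ^d): for each m the integrals defining Q_m^R(f,f)(v) converge absolutely for a.e. v ∈ ℝ^d, Q_m^R(f,f) ∈ L²(ℝ^d), and ∑_{m=1}^M ‖Q_m^R(f,f)‖_{L²(ℝ^d)} ≤ C_R · ( ∑_{m=1}^M ‖f_m‖_{L²(ℝ^d)} )². -/

import Mathlib

open MeasureTheory Real Filter
open scoped ENNReal NNReal

noncomputable section

/-- Euclidean space ℝ^d. -/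
abbrev Euc (d : ℕ) := EuclideanSpace ℝ (Fin d)

/-- The Japanese bracket ⟨v⟩ = √(1+|v|²). -/
def jap {d : ℕ} (v : Euc d) : ℝ := Real.sqrt (1 + ‖v‖ ^ 2)

/-- The change of variables w' = (m·v − (m−n)·w)/n. -/
def cvar (d : ℕ) (m n : ℕ) (v w : Euc d) : Euc d :=
  ((n : ℝ))⁻¹ • ((m : ℝ) • v - ((m : ℝ) - (n : ℝ)) • w)

/-- The coagulation operator Q_m(g,f). -/
def Qcoag (d M : ℕ) (g f : ℕ → Euc d → ℝ) (m : ℕ) (v : Euc d) : ℝ :=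
  (∑ n ∈ Finset.Ico 1 m, ((m : ℝ) / (n : ℝ)) ^ 2 *
      ∫ w, g n (cvar d m n v w) * f (m - n) w * ‖v - w‖)
  - 2 * ∑ n ∈ Finset.Icc 1 M, g m v * ∫ w, f n w * ‖v - w‖

/-- The weighted L^p norm ‖h‖_{p,k} = ‖h ⟨·⟩^k‖_{L^p}. -/
def wnorm (d : ℕ) (p : ℝ≥0∞) (k : ℕ) (h : Euc d → ℝ) : ℝ≥0∞ :=
  eLpNorm (fun v => h v * jap v ^ k) p volume

/-- Partial derivative in direction i. -/
def pd (d : ℕ) (i : Fin d) (h : Euc d → ℝ) (v : Euc d) : ℝ :=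
  fderiv ℝ h v (EuclideanSpace.single i 1)

/-- Laplacian. -/
def lap (d : ℕ) (h : Euc d → ℝ) (v : Euc d) : ℝ :=
  ∑ i : Fin d, pd d i (fun w => pd d i h w) v

/-- div_v (v · h(v)). -/
def divVF (d : ℕ) (h : Euc d → ℝ) (v : Euc d) : ℝ :=
  ∑ i : Fin d, pd d i (fun w => w i * h w) v

/-- v · ∇φ(v). -/
def vGrad (d : ℕ) (h : Euc d → ℝ) (v : Euc d) : ℝ :=
  ∑ i : Fin d, v i * pd d i h v

/-- A (nonnegative) classical solution of the spatially homogeneous coagulation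
system ∂_t f_m = Δ f_m + div(v f_m) + Q_m(f,f) on [0,T]. -/
structure IsClassicalSolution (d M : ℕ) (T : ℝ) (f : ℕ → ℝ → Euc d → ℝ) : Prop where
  schwartz : ∀ m ∈ Finset.Icc 1 M, ∀ t ∈ Set.Icc (0 : ℝ) T,
    ∃ φ : SchwartzMap (Euc d) ℝ, ∀ v, f m t v = φ v
  cont : ∀ m ∈ Finset.Icc 1 M, ∀ n : ℕ,
    ContinuousOn (fun p : ℝ × Euc d => iteratedFDeriv ℝ n (fun w => f m p.1 w) p.2)
      (Set.Icc 0 T ×ˢ Set.univ)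
  pde : ∀ m ∈ Finset.Icc 1 M, ∀ t ∈ Set.Icc (0 : ℝ) T, ∀ v : Euc d,
    HasDerivWithinAt (fun s => f m s v)
      (lap d (fun w => f m t w) v + divVF d (fun w => f m t w) v +
        Qcoag d M (fun n => f n t) (fun n => f n t) m v)
      (Set.Icc 0 T) t


/-- The indicator of the ball of radius R centered at the origin. -/
def indR (d : ℕ) (R : ℝ) (v : Euc d) : ℝ :=
  (Metric.closedBall (0 : Euc d) R).indicator (fun _ => (1 : ℝ)) v

/-- The truncated coagulation operator Q_m^R(f,f). -/
def Qtrunc (d M : ℕ) (R : ℝ) (f : ℕ → Euc d → ℝ) (m : ℕ) (v : Euc d) : ℝ :=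
  indR d R v *
    ((∑ n ∈ Finset.Ico 1 m, ((m : ℝ) / (n : ℝ)) ^ 2 *
        ∫ w, f n (cvar d m n v w) * f (m - n) w * ‖v - w‖ * indR d R w)
      - 2 * ∑ n ∈ Finset.Icc 1 M, f m v * ∫ w, f n w * ‖v - w‖ * indR d R w)

/-- The Ornstein–Uhlenbeck kernel. -/
def ouKer (d : ℕ) (t : ℝ) (w : Euc d) : ℝ :=
  (2 * Real.pi * (Real.exp (2 * t) - 1)) ^ (-(d : ℝ) / 2) *
    Real.exp (-‖w‖ ^ 2 / (2 * (Real.exp (2 * t) - 1)))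

/-- The Ornstein–Uhlenbeck semigroup P_t. -/
def ouSG (d : ℕ) (t : ℝ) (h : Euc d → ℝ) (v : Euc d) : ℝ :=
  if t = 0 then h v else ∫ w, ouKer d t w * h (Real.exp t • v - w)

/-- The space L²(ℝ^d). -/
abbrev L2 (d : ℕ) := Lp ℝ 2 (volume : Measure (Euc d))

/-- A mild solution of the truncated system on [0,T] with initial datum f⁰:
f_m ∈ C([0,T]; L²) and f_m(t) = P_t f⁰_m + ∫_0^t P_{t−s}(d·f_m(s) + Q_m^R(f(s),f(s))) ds
in L² for every t ∈ [0,T]. -/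
structure IsMildSolution (d M : ℕ) (R T : ℝ)
    (f0 : ℕ → Euc d → ℝ) (f : ℕ → ℝ → L2 d) : Prop where
  cont : ∀ m ∈ Finset.Icc 1 M, ContinuousOn (f m) (Set.Icc 0 T)
  mild : ∀ m ∈ Finset.Icc 1 M, ∀ t ∈ Set.Icc (0 : ℝ) T,
    (f m t : Euc d → ℝ) =ᵐ[volume] fun v =>
      ouSG d t (f0 m) v +
        ∫ s in (0 : ℝ)..t,
          ouSG d (t - s)
            (fun w => (d : ℝ) * (f m s : Euc d → ℝ) w +
              Qtrunc d M R (fun n => (f n s : Euc d → ℝ)) m w) v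


section Aux

variable {d : ℕ}

lemma indR_nonneg (R : ℝ) (v : Euc d) : 0 ≤ indR d R v :=
  Set.indicator_nonneg (fun _ _ => zero_le_one) v

lemma indR_le_one (R : ℝ) (v : Euc d) : indR d R v ≤ 1 := by
  unfold indR; by_cases h : v ∈ Metric.closedBall (0 : Euc d) R
  · rw [Set.indicator_of_mem h]
  · rw [Set.indicator_of_notMem h]; exact zero_le_one

lemma indR_mul_self (R : ℝ) (v : Euc d) : indR d R v * indR d R v = indR d R v := by
  unfold indR; by_cases h : v ∈ Metric.closedBall (0 : Euc d) R
  · rw [Set.indicator_of_mem h]; norm_num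
  · rw [Set.indicator_of_notMem h]; ring

lemma measurable_indR (R : ℝ) : Measurable (indR d R) :=
  measurable_const.indicator measurableSet_closedBall

lemma memℒp_indR (R : ℝ) : MemLp (indR d R) 2 (volume : Measure (Euc d)) :=
  memLp_indicator_const 2 measurableSet_closedBall 1
    (Or.inr (measure_closedBall_lt_top).ne)

lemma ennhalf : ((1:ℝ≥0∞)/1) = 1/2 + 1/2 := by rw [ENNReal.div_add_div_same, one_add_one_eq_two, ENNReal.div_self two_ne_zero ENNReal.ofNat_ne_top, one_div_one]

lemma map_affine (a : ℝ) (ha : a ≠ 0) (b : Euc d) :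
    Measure.map (fun w : Euc d => a • w + b) (volume : Measure (Euc d))
      = ENNReal.ofReal |(a ^ d)⁻¹| • (volume : Measure (Euc d)) := by
  have h1 : (fun w : Euc d => a • w + b)
      = (fun x : Euc d => x + b) ∘ (fun w : Euc d => a • w) := rfl
  rw [h1, ← Measure.map_map (measurable_add_const b) (measurable_const_smul a)]
  rw [show (fun w : Euc d => a • w) = (a • ·) from rfl, Measure.map_addHaar_smul (volume) ha,
    Measure.map_smul, map_add_right_eq_self]
  congr 2
  simp [finrank_euclideanSpace_fin]

lemma qmp_affine (a : ℝ) (ha : a ≠ 0) (b : Euc d) :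
    Measure.QuasiMeasurePreserving (fun w : Euc d => a • w + b)
      (volume : Measure (Euc d)) (volume : Measure (Euc d)) := by
  refine ⟨(measurable_id.const_smul a).add_const b, ?_⟩
  rw [map_affine a ha b]
  exact Measure.AbsolutelyContinuous.rfl.smul_left _

def kap (d : ℕ) (a : ℝ) : ℝ≥0∞ :=
  (ENNReal.ofReal |(a ^ d)⁻¹|) ^ (((1:ℝ≥0∞)/2).toReal)

lemma kap_ne_top (a : ℝ) : kap d a ≠ ∞ :=
  ENNReal.rpow_ne_top_of_nonneg ENNReal.toReal_nonneg ENNReal.ofReal_ne_top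

lemma eLpNorm_affine (f : Euc d → ℝ) (hf : AEStronglyMeasurable f (volume : Measure (Euc d)))
    (a : ℝ) (ha : a ≠ 0) (b : Euc d) :
    eLpNorm (fun w => f (a • w + b)) 2 (volume : Measure (Euc d))
      = kap d a * eLpNorm f 2 volume := by
  have hm := map_affine a ha b
  have hac : Measure.map (fun w : Euc d => a • w + b) volume ≪ volume := by
    rw [hm]; exact Measure.AbsolutelyContinuous.rfl.smul_left _
  have h1 : eLpNorm f 2 (Measure.map (fun w : Euc d => a • w + b) volume)
      = eLpNorm (f ∘ fun w : Euc d => a • w + b) 2 volume :=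
    eLpNorm_map_measure (hf.mono_ac hac) (qmp_affine a ha b).aemeasurable
  rw [hm, eLpNorm_smul_measure_of_ne_top (by norm_num : (2:ℝ≥0∞) ≠ ∞)] at h1
  rw [show (fun w : Euc d => f (a • w + b)) = f ∘ fun w : Euc d => a • w + b from rfl, ← h1]
  rfl

lemma memℒp_affine (f : Euc d → ℝ) (hf : MemLp f 2 (volume : Measure (Euc d)))
    (a : ℝ) (ha : a ≠ 0) (b : Euc d) :
    MemLp (fun w => f (a • w + b)) 2 (volume : Measure (Euc d)) := by
  refine ⟨hf.1.comp_quasiMeasurePreserving (qmp_affine a ha b), ?_⟩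
  rw [eLpNorm_affine f hf.1 a ha b]
  exact ENNReal.mul_lt_top (kap_ne_top a).lt_top hf.2

lemma cvar_eq (m n : ℕ) (v w : Euc d) :
    cvar d m n v w
      = (-((n:ℝ)⁻¹ * ((m:ℝ) - (n:ℝ)))) • w + ((n:ℝ)⁻¹ * (m:ℝ)) • v := by
  unfold cvar
  rw [smul_sub, smul_smul, smul_smul, neg_smul, sub_eq_add_neg, add_comm]

lemma cvar_coef_ne (m n : ℕ) (h1 : 1 ≤ n) (h2 : n < m) :
    (-((n:ℝ)⁻¹ * ((m:ℝ) - (n:ℝ)))) ≠ 0 := by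
  have hn : (0:ℝ) < n := by exact_mod_cast h1
  have hmn : (n:ℝ) < m := by exact_mod_cast h2
  intro h
  rw [neg_eq_zero, mul_eq_zero] at h
  rcases h with h | h
  · exact (inv_ne_zero hn.ne') h
  · linarith

/-- Key integrability and bound lemma. -/
lemma key (R : ℝ) (hR : 0 < R) (v : Euc d) (g h : Euc d → ℝ)
    (hg : MemLp g 2 (volume : Measure (Euc d))) (hh : MemLp h 2 (volume : Measure (Euc d))) :
    Integrable (fun w => g w * h w * ‖v - w‖ * indR d R w) (volume : Measure (Euc d)) ∧
    (‖v‖ ≤ R → |∫ w, g w * h w * ‖v - w‖ * indR d R w| ≤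
      2 * R * (eLpNorm g 2 (volume : Measure (Euc d))
        * eLpNorm h 2 (volume : Measure (Euc d))).toReal) := by
  set φ : Euc d → ℝ := fun w => ‖v - w‖ * indR d R w with hφ
  have hφm : AEStronglyMeasurable φ (volume : Measure (Euc d)) :=
    ((continuous_const.sub continuous_id).norm.aestronglyMeasurable).mul
      (measurable_indR R).aestronglyMeasurable
  have hφ0 : ∀ w, 0 ≤ φ w := fun w => mul_nonneg (norm_nonneg _) (indR_nonneg R w)
  have hφb : ∀ w, φ w ≤ ‖v‖ + R := by
    intro w
    by_cases hw : w ∈ Metric.closedBall (0 : Euc d) R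
    · have hwR : ‖w‖ ≤ R := by simpa [mem_closedBall_zero_iff] using hw
      have : ‖v - w‖ ≤ ‖v‖ + ‖w‖ := norm_sub_le _ _
      calc φ w ≤ ‖v - w‖ * 1 := mul_le_mul_of_nonneg_left (indR_le_one R w) (norm_nonneg _)
        _ = ‖v - w‖ := mul_one _
        _ ≤ ‖v‖ + R := by linarith
    · simp [hφ, indR, Set.indicator_of_notMem hw]
      positivity
  have hG : MemLp (fun w => g w * h w) 1 (volume : Measure (Euc d)) := by
    have := MemLp.smul (φ := g) (r := 1) hh hg
    exact this
  have hGi : Integrable (fun w => g w * h w) (volume : Measure (Euc d)) :=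
    memLp_one_iff_integrable.mp hG
  have hFeq : (fun w => g w * h w * ‖v - w‖ * indR d R w) = fun w => φ w * (g w * h w) := by
    funext w; simp only [hφ]; ring
  have hF : Integrable (fun w => g w * h w * ‖v - w‖ * indR d R w) (volume : Measure (Euc d)) := by
    rw [hFeq]
    exact hGi.bdd_mul (c := ‖v‖ + R) hφm (Eventually.of_forall fun w => by
      rw [Real.norm_of_nonneg (hφ0 w)]; exact hφb w)
  refine ⟨hF, fun hv => ?_⟩
  have hφ2 : ∀ w, φ w ≤ 2 * R := by
    intro w
    by_cases hw : w ∈ Metric.closedBall (0 : Euc d) R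
    · have hwR : ‖w‖ ≤ R := by simpa [mem_closedBall_zero_iff] using hw
      have : ‖v - w‖ ≤ ‖v‖ + ‖w‖ := norm_sub_le _ _
      calc φ w ≤ ‖v - w‖ * 1 := mul_le_mul_of_nonneg_left (indR_le_one R w) (norm_nonneg _)
        _ = ‖v - w‖ := mul_one _
        _ ≤ 2 * R := by linarith
    · simp [hφ, indR, Set.indicator_of_notMem hw]
      positivity
  have hnorm : ∀ w, |g w * h w * ‖v - w‖ * indR d R w| ≤ 2 * R * |g w * h w| := by
    intro w
    have he : g w * h w * ‖v - w‖ * indR d R w = φ w * (g w * h w) := by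
      simp only [hφ]; ring
    rw [he, abs_mul, abs_of_nonneg (hφ0 w)]
    exact mul_le_mul_of_nonneg_right (hφ2 w) (abs_nonneg _)
  have h1 : |∫ w, g w * h w * ‖v - w‖ * indR d R w| ≤ ∫ w, 2 * R * |g w * h w| := by
    calc |∫ w, g w * h w * ‖v - w‖ * indR d R w|
        ≤ ∫ w, |g w * h w * ‖v - w‖ * indR d R w| := by
          rw [← Real.norm_eq_abs]
          refine (norm_integral_le_integral_norm _).trans_eq ?_
          simp only [Real.norm_eq_abs]
      _ ≤ ∫ w, 2 * R * |g w * h w| := by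
          refine integral_mono ?_ ?_ hnorm
          · simpa only [Real.norm_eq_abs] using hF.norm
          · simpa only [Real.norm_eq_abs] using hGi.norm.const_mul (2 * R)
  have h2 : ∫ w, 2 * R * |g w * h w| = 2 * R * ∫ w, |g w * h w| := integral_const_mul _ _
  have h3 : ∫ w, |g w * h w|
      = (eLpNorm (fun w => g w * h w) 1 (volume : Measure (Euc d))).toReal := by
    rw [eLpNorm_one_eq_lintegral_enorm,
      ← integral_norm_eq_lintegral_enorm hGi.aestronglyMeasurable]
    simp only [Real.norm_eq_abs]
  have h4 : eLpNorm (fun w => g w * h w) 1 (volume : Measure (Euc d))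
      ≤ eLpNorm g 2 volume * eLpNorm h 2 volume := by
    have := eLpNorm_smul_le_mul_eLpNorm (f := h) hh.1 (φ := g) hg.1 (p := 2) (q := 2) (r := 1)
    exact this
  have h5 : (eLpNorm (fun w => g w * h w) 1 (volume : Measure (Euc d))).toReal
      ≤ (eLpNorm g 2 volume * eLpNorm h 2 volume).toReal :=
    ENNReal.toReal_mono (ENNReal.mul_ne_top hg.2.ne hh.2.ne) h4
  calc |∫ w, g w * h w * ‖v - w‖ * indR d R w|
      ≤ ∫ w, 2 * R * |g w * h w| := h1
    _ = 2 * R * ∫ w, |g w * h w| := h2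
    _ ≤ 2 * R * (eLpNorm g 2 volume * eLpNorm h 2 volume).toReal := by
        rw [h3]; exact mul_le_mul_of_nonneg_left h5 (by positivity)

lemma cvar_eq' (m n : ℕ) (v w : Euc d) :
    cvar d m n v w
      = ((n:ℝ)⁻¹ * (m:ℝ)) • v + (-((n:ℝ)⁻¹ * ((m:ℝ) - (n:ℝ)))) • w := by
  rw [cvar_eq, add_comm]

lemma cvar_coef1_ne (m n : ℕ) (h1 : 1 ≤ n) (h2 : n < m) : ((n:ℝ)⁻¹ * (m:ℝ)) ≠ 0 := by
  have hn : (0:ℝ) < n := by exact_mod_cast h1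
  have hm : (0:ℝ) < m := by exact_mod_cast (h1.trans h2.le)
  positivity

lemma qmp_cvar (m n : ℕ) (h1 : 1 ≤ n) (h2 : n < m) :
    Measure.QuasiMeasurePreserving (fun p : Euc d × Euc d => cvar d m n p.1 p.2)
      ((volume : Measure (Euc d)).prod (volume : Measure (Euc d)))
      (volume : Measure (Euc d)) := by
  have hcont : Continuous (fun p : Euc d × Euc d => cvar d m n p.1 p.2) := by
    unfold cvar
    exact (((show Continuous fun p : Euc d × Euc d => p.1 from continuous_fst).const_smul (m:ℝ)).sub
      ((show Continuous fun p : Euc d × Euc d => p.2 from continuous_snd).const_smul ((m:ℝ) - (n:ℝ)))).const_smul ((n:ℝ))⁻¹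
  refine MeasureTheory.QuasiMeasurePreserving.prod_of_left hcont.measurable
    (Eventually.of_forall fun w => ?_)
  have : (fun v : Euc d => cvar d m n v w)
      = fun v : Euc d => ((n:ℝ)⁻¹ * (m:ℝ)) • v + (-((n:ℝ)⁻¹ * ((m:ℝ) - (n:ℝ)))) • w := by
    funext v; exact cvar_eq' m n v w
  rw [this]
  exact qmp_affine _ (cvar_coef1_ne m n h1 h2) _

lemma aesm_gain (R : ℝ) (f1 f2 : Euc d → ℝ)
    (h1 : AEStronglyMeasurable f1 (volume : Measure (Euc d)))
    (h2 : AEStronglyMeasurable f2 (volume : Measure (Euc d)))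
    (m n : ℕ) (hn1 : 1 ≤ n) (hn2 : n < m) :
    AEStronglyMeasurable
      (fun v => ∫ w, f1 (cvar d m n v w) * f2 w * ‖v - w‖ * indR d R w)
      (volume : Measure (Euc d)) := by
  apply AEStronglyMeasurable.integral_prod_right'
    (f := fun p : Euc d × Euc d => f1 (cvar d m n p.1 p.2) * f2 p.2 * ‖p.1 - p.2‖ * indR d R p.2)
  refine (((h1.comp_quasiMeasurePreserving (qmp_cvar m n hn1 hn2)).mul
    (h2.comp_quasiMeasurePreserving Measure.quasiMeasurePreserving_snd)).mul
    ((continuous_fst.sub continuous_snd).norm.aestronglyMeasurable)).mul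
    (((measurable_indR R).comp measurable_snd).aestronglyMeasurable)

lemma aesm_loss (R : ℝ) (f2 : Euc d → ℝ)
    (h2 : AEStronglyMeasurable f2 (volume : Measure (Euc d))) :
    AEStronglyMeasurable
      (fun v => ∫ w, f2 w * ‖v - w‖ * indR d R w)
      (volume : Measure (Euc d)) := by
  apply AEStronglyMeasurable.integral_prod_right'
    (f := fun p : Euc d × Euc d => f2 p.2 * ‖p.1 - p.2‖ * indR d R p.2)
  exact ((h2.comp_quasiMeasurePreserving Measure.quasiMeasurePreserving_snd).mul
    ((continuous_fst.sub continuous_snd).norm.aestronglyMeasurable)).mul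
    (((measurable_indR R).comp measurable_snd).aestronglyMeasurable)

/-- loss integrand rewriting -/
lemma loss_eq (R : ℝ) (g : Euc d → ℝ) (v : Euc d) :
    (fun w => g w * ‖v - w‖ * indR d R w)
      = fun w => g w * indR d R w * ‖v - w‖ * indR d R w := by
  funext w
  calc g w * ‖v - w‖ * indR d R w = g w * ‖v - w‖ * (indR d R w * indR d R w) := by
        rw [indR_mul_self]
    _ = g w * indR d R w * ‖v - w‖ * indR d R w := by ring

end Aux

/-- for L² families the truncated coagulation operator is well defined
(the defining integrals converge absolutely a.e.), maps into L², and satisfies a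
quadratic bound ∑_m ‖Q_m^R(f,f)‖_{L²} ≤ C_R (∑_m ‖f_m‖_{L²})². -/

theorem statement9 (d M : ℕ) (hd : 1 ≤ d) (hM : 1 ≤ M) (R : ℝ) (hR : 0 < R) :
    ∃ C : ℝ≥0, ∀ f : ℕ → Euc d → ℝ,
      (∀ m ∈ Finset.Icc 1 M, MemLp (f m) 2 (volume : Measure (Euc d))) →
      (∀ m ∈ Finset.Icc 1 M, (∀ᵐ v ∂(volume : Measure (Euc d)),
          (∀ n ∈ Finset.Ico 1 m,
            Integrable (fun w => f n (cvar d m n v w) * f (m - n) w * ‖v - w‖ * indR d R w)) ∧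
          ∀ n ∈ Finset.Icc 1 M,
            Integrable (fun w => f n w * ‖v - w‖ * indR d R w)) ∧
        MemLp (Qtrunc d M R f m) 2 (volume : Measure (Euc d))) ∧
      (∑ m ∈ Finset.Icc 1 M, eLpNorm (Qtrunc d M R f m) 2 volume) ≤
        (C : ℝ≥0∞) * (∑ m ∈ Finset.Icc 1 M, eLpNorm (f m) 2 volume) ^ 2 := by
  classical
  set Nind : ℝ≥0∞ := eLpNorm (indR d R) 2 (volume : Measure (Euc d)) with hNind
  have hNind_ne : Nind ≠ ∞ := (memℒp_indR R).2.ne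
  set K : ℕ → ℝ≥0∞ := fun m => ∑ n ∈ Finset.Ico 1 m,
    ENNReal.ofReal (((m:ℝ)/(n:ℝ))^2 * (2*R)) * kap d (-((n:ℝ)⁻¹ * ((m:ℝ)-(n:ℝ)))) with hK
  have hK_ne : ∀ m, K m ≠ ∞ := by
    intro m
    refine (ENNReal.sum_lt_top.mpr fun n _ => ?_).ne
    exact ENNReal.mul_lt_top ENNReal.ofReal_lt_top (kap_ne_top _).lt_top
  set Ctot : ℝ≥0∞ := ∑ m ∈ Finset.Icc 1 M,
    (K m * Nind + 2 * ENNReal.ofReal (2*R) * Nind) with hCtot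
  have hCtot_ne : Ctot ≠ ∞ := by
    refine (ENNReal.sum_lt_top.mpr fun m _ => ?_).ne
    exact ENNReal.add_lt_top.mpr ⟨ENNReal.mul_lt_top (hK_ne m).lt_top hNind_ne.lt_top,
      ENNReal.mul_lt_top (ENNReal.mul_lt_top (ENNReal.ofNat_ne_top.lt_top) ENNReal.ofReal_lt_top) hNind_ne.lt_top⟩
  refine ⟨Ctot.toNNReal, ?_⟩
  intro f hf
  set S : ℝ≥0∞ := ∑ k ∈ Finset.Icc 1 M, eLpNorm (f k) 2 (volume : Measure (Euc d)) with hS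
  have hS_ne : S ≠ ∞ := (ENNReal.sum_lt_top.mpr fun k hk => (hf k hk).2).ne
  have hfle : ∀ k ∈ Finset.Icc 1 M, eLpNorm (f k) 2 (volume : Measure (Euc d)) ≤ S :=
    fun k hk => by rw [hS]; exact Finset.single_le_sum (f := fun i => eLpNorm (f i) 2 (volume : Measure (Euc d))) (fun i _ => zero_le) hk
  have hmemn : ∀ m ∈ Finset.Icc 1 M, ∀ n ∈ Finset.Ico 1 m,
      n ∈ Finset.Icc 1 M ∧ m - n ∈ Finset.Icc 1 M := by
    intro m hm n hn
    obtain ⟨hn1, hn2⟩ := Finset.mem_Ico.mp hn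
    obtain ⟨hm1, hm2⟩ := Finset.mem_Icc.mp hm
    exact ⟨Finset.mem_Icc.mpr ⟨hn1, le_trans hn2.le hm2⟩,
      Finset.mem_Icc.mpr ⟨Nat.le_sub_of_add_le (by omega), le_trans (Nat.sub_le m n) hm2⟩⟩
  -- gain composition facts
  have hgain : ∀ m ∈ Finset.Icc 1 M, ∀ n ∈ Finset.Ico 1 m, ∀ v : Euc d,
      MemLp (fun w => f n (cvar d m n v w)) 2 (volume : Measure (Euc d)) ∧
      eLpNorm (fun w => f n (cvar d m n v w)) 2 (volume : Measure (Euc d))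
        = kap d (-((n:ℝ)⁻¹ * ((m:ℝ)-(n:ℝ)))) * eLpNorm (f n) 2 volume := by
    intro m hm n hn v
    obtain ⟨hn1, hn2⟩ := Finset.mem_Ico.mp hn
    have hnm := (hmemn m hm n hn).1
    have ha := cvar_coef_ne m n hn1 hn2
    have heq : (fun w : Euc d => f n (cvar d m n v w))
        = fun w => f n ((-((n:ℝ)⁻¹ * ((m:ℝ)-(n:ℝ)))) • w + ((n:ℝ)⁻¹ * (m:ℝ)) • v) := by
      funext w; rw [cvar_eq]
    rw [heq]
    exact ⟨memℒp_affine (f n) (hf n hnm) _ ha _, eLpNorm_affine (f n) (hf n hnm).1 _ ha _⟩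
  -- the constants B₁, B₂
  set B1 : ℕ → ℝ := fun m => ∑ n ∈ Finset.Ico 1 m, ((m:ℝ)/(n:ℝ))^2 *
    (2*R*((kap d (-((n:ℝ)⁻¹ * ((m:ℝ)-(n:ℝ)))) * eLpNorm (f n) 2 volume
      * eLpNorm (f (m-n)) 2 (volume : Measure (Euc d))).toReal)) with hB1
  set B2 : ℝ := 2 * ∑ n ∈ Finset.Icc 1 M,
    2*R*((eLpNorm (f n) 2 (volume : Measure (Euc d)) * Nind).toReal) with hB2
  have hB10 : ∀ m, 0 ≤ B1 m := by
    intro m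
    refine Finset.sum_nonneg fun n hn => ?_
    have := ENNReal.toReal_nonneg (a := kap d (-((n:ℝ)⁻¹ * ((m:ℝ)-(n:ℝ)))) * eLpNorm (f n) 2 volume
      * eLpNorm (f (m-n)) 2 (volume : Measure (Euc d)))
    positivity
  have hB20 : 0 ≤ B2 := by
    rw [hB2]
    refine mul_nonneg (by norm_num) (Finset.sum_nonneg fun n hn => ?_)
    have := ENNReal.toReal_nonneg (a := eLpNorm (f n) 2 (volume : Measure (Euc d)) * Nind)
    positivity
  -- integrability of the gain integrands, for every v
  have hint_gain : ∀ m ∈ Finset.Icc 1 M, ∀ v : Euc d, ∀ n ∈ Finset.Ico 1 m,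
      Integrable (fun w => f n (cvar d m n v w) * f (m - n) w * ‖v - w‖ * indR d R w)
        (volume : Measure (Euc d)) :=
    fun m hm v n hn =>
      (key R hR v _ _ ((hgain m hm n hn v).1) (hf (m-n) (hmemn m hm n hn).2)).1
  -- integrability of the loss integrands, for every v
  have hint_loss : ∀ v : Euc d, ∀ n ∈ Finset.Icc 1 M,
      Integrable (fun w => f n w * ‖v - w‖ * indR d R w) (volume : Measure (Euc d)) := by
    intro v n hn
    rw [loss_eq R (f n) v]
    exact (key R hR v _ _ (hf n hn) (memℒp_indR R)).1
  -- pointwise bounds on the integrals, for ‖v‖ ≤ R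
  have hbd_gain : ∀ m ∈ Finset.Icc 1 M, ∀ v : Euc d, ‖v‖ ≤ R → ∀ n ∈ Finset.Ico 1 m,
      |∫ w, f n (cvar d m n v w) * f (m - n) w * ‖v - w‖ * indR d R w| ≤
        2*R*((kap d (-((n:ℝ)⁻¹ * ((m:ℝ)-(n:ℝ)))) * eLpNorm (f n) 2 volume
          * eLpNorm (f (m-n)) 2 (volume : Measure (Euc d))).toReal) := by
    intro m hm v hv n hn
    have h := (key R hR v _ _ ((hgain m hm n hn v).1) (hf (m-n) (hmemn m hm n hn).2)).2 hv
    rwa [(hgain m hm n hn v).2] at h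
  have hbd_loss : ∀ v : Euc d, ‖v‖ ≤ R → ∀ n ∈ Finset.Icc 1 M,
      |∫ w, f n w * ‖v - w‖ * indR d R w| ≤
        2*R*((eLpNorm (f n) 2 (volume : Measure (Euc d)) * Nind).toReal) := by
    intro v hv n hn
    rw [loss_eq R (f n) v]
    exact (key R hR v _ _ (hf n hn) (memℒp_indR R)).2 hv
  -- pointwise bound on Qtrunc
  have hbound : ∀ m ∈ Finset.Icc 1 M, ∀ v : Euc d,
      ‖Qtrunc d M R f m v‖ ≤ B1 m * indR d R v + B2 * ‖f m v‖ := by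
    intro m hm v
    by_cases hv : v ∈ Metric.closedBall (0 : Euc d) R
    · have hvR : ‖v‖ ≤ R := by simpa [mem_closedBall_zero_iff] using hv
      have hind : indR d R v = 1 := Set.indicator_of_mem hv _
      have hA : |∑ n ∈ Finset.Ico 1 m, ((m:ℝ)/(n:ℝ))^2 *
          ∫ w, f n (cvar d m n v w) * f (m - n) w * ‖v - w‖ * indR d R w| ≤ B1 m := by
        refine (Finset.abs_sum_le_sum_abs _ _).trans ?_
        refine Finset.sum_le_sum fun n hn => ?_
        rw [abs_mul, abs_of_nonneg (by positivity : (0:ℝ) ≤ ((m:ℝ)/(n:ℝ))^2)]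
        exact mul_le_mul_of_nonneg_left (hbd_gain m hm v hvR n hn) (by positivity)
      have hBv : |∑ n ∈ Finset.Icc 1 M, f m v * ∫ w, f n w * ‖v - w‖ * indR d R w| ≤
          |f m v| * (∑ n ∈ Finset.Icc 1 M,
            2*R*((eLpNorm (f n) 2 (volume : Measure (Euc d)) * Nind).toReal)) := by
        refine (Finset.abs_sum_le_sum_abs _ _).trans ?_
        rw [Finset.mul_sum]
        refine Finset.sum_le_sum fun n hn => ?_
        rw [abs_mul]
        exact mul_le_mul_of_nonneg_left (hbd_loss v hvR n hn) (abs_nonneg _)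
      have hQv : Qtrunc d M R f m v = (∑ n ∈ Finset.Ico 1 m, ((m:ℝ)/(n:ℝ))^2 *
          ∫ w, f n (cvar d m n v w) * f (m - n) w * ‖v - w‖ * indR d R w)
          - 2 * ∑ n ∈ Finset.Icc 1 M, f m v * ∫ w, f n w * ‖v - w‖ * indR d R w := by
        unfold Qtrunc; rw [hind, one_mul]
      rw [Real.norm_eq_abs, hQv, sub_eq_add_neg]
      refine ((abs_add_le _ _).trans ?_)
      rw [abs_neg, abs_mul, abs_of_nonneg (by norm_num : (0:ℝ) ≤ 2)]
      rw [hind, mul_one, Real.norm_eq_abs]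
      have h2B : 2 * |∑ n ∈ Finset.Icc 1 M, f m v * ∫ w, f n w * ‖v - w‖ * indR d R w|
          ≤ B2 * |f m v| := by
        rw [hB2]
        calc 2 * |∑ n ∈ Finset.Icc 1 M, f m v * ∫ w, f n w * ‖v - w‖ * indR d R w|
            ≤ 2 * (|f m v| * ∑ n ∈ Finset.Icc 1 M,
              2*R*((eLpNorm (f n) 2 (volume : Measure (Euc d)) * Nind).toReal)) := by
              exact mul_le_mul_of_nonneg_left hBv (by norm_num)
          _ = 2 * (∑ n ∈ Finset.Icc 1 M,
              2*R*((eLpNorm (f n) 2 (volume : Measure (Euc d)) * Nind).toReal)) * |f m v| := by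
              ring
      exact add_le_add hA h2B
    · have hind : indR d R v = 0 := Set.indicator_of_notMem hv _
      have hQv : Qtrunc d M R f m v = 0 := by unfold Qtrunc; rw [hind, zero_mul]
      rw [hQv, norm_zero]
      exact add_nonneg (mul_nonneg (hB10 m) (indR_nonneg R v))
        (mul_nonneg hB20 (norm_nonneg _))
  -- measurability of Qtrunc
  have haesm : ∀ m ∈ Finset.Icc 1 M,
      AEStronglyMeasurable (Qtrunc d M R f m) (volume : Measure (Euc d)) := by
    intro m hm
    have h1 : AEStronglyMeasurable (fun v => ∑ n ∈ Finset.Ico 1 m, ((m:ℝ)/(n:ℝ))^2 *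
        ∫ w, f n (cvar d m n v w) * f (m-n) w * ‖v - w‖ * indR d R w)
        (volume : Measure (Euc d)) := by
      refine Finset.aestronglyMeasurable_fun_sum _ fun n hn => ?_
      obtain ⟨hn1, hn2⟩ := Finset.mem_Ico.mp hn
      exact (aesm_gain R (f n) (f (m-n)) (hf n (hmemn m hm n hn).1).1
        (hf (m-n) (hmemn m hm n hn).2).1 m n hn1 hn2).const_mul _
    have h2 : AEStronglyMeasurable (fun v => ∑ n ∈ Finset.Icc 1 M, f m v *
        ∫ w, f n w * ‖v - w‖ * indR d R w) (volume : Measure (Euc d)) :=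
      Finset.aestronglyMeasurable_fun_sum _ fun n hn =>
        (hf m hm).1.mul (aesm_loss R (f n) (hf n hn).1)
    exact ((measurable_indR R).aestronglyMeasurable).mul (h1.sub (h2.const_mul 2))
  -- main per-m estimate
  have hQle : ∀ m ∈ Finset.Icc 1 M, eLpNorm (Qtrunc d M R f m) 2 volume
      ≤ (K m * Nind + 2 * ENNReal.ofReal (2*R) * Nind) * S^2 := by
    intro m hm
    have step1 : eLpNorm (Qtrunc d M R f m) 2 volume
        ≤ ENNReal.ofReal (B1 m) * Nind + ENNReal.ofReal B2 * eLpNorm (f m) 2 volume := by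
      calc eLpNorm (Qtrunc d M R f m) 2 volume
          ≤ eLpNorm (fun v => B1 m * indR d R v + B2 * ‖f m v‖) 2 volume :=
            eLpNorm_mono_real (hbound m hm)
        _ ≤ eLpNorm (fun v => B1 m * indR d R v) 2 volume
            + eLpNorm (fun v : Euc d => B2 * ‖f m v‖) 2 volume :=
            eLpNorm_add_le (((measurable_indR R).aestronglyMeasurable).const_mul _)
              ((hf m hm).1.norm.const_mul _) one_le_two
        _ = ENNReal.ofReal (B1 m) * Nind + ENNReal.ofReal B2 * eLpNorm (f m) 2 volume := by
            rw [show (fun v => B1 m * indR d R v) = (B1 m) • (indR d R) from rfl,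
              show (fun v : Euc d => B2 * ‖f m v‖) = B2 • (fun v => ‖f m v‖) from rfl,
              eLpNorm_const_smul, eLpNorm_const_smul, eLpNorm_norm,
              Real.enorm_eq_ofReal (hB10 m), Real.enorm_eq_ofReal hB20]
    have step2 : ENNReal.ofReal (B1 m) ≤ K m * S^2 := by
      rw [hB1]
      rw [ENNReal.ofReal_sum_of_nonneg (fun n hn => by
        have := ENNReal.toReal_nonneg (a := kap d (-((n:ℝ)⁻¹ * ((m:ℝ)-(n:ℝ))))
          * eLpNorm (f n) 2 volume * eLpNorm (f (m-n)) 2 (volume : Measure (Euc d)))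
        positivity)]
      rw [hK, Finset.sum_mul]
      refine Finset.sum_le_sum fun n hn => ?_
      have h1 : ((m:ℝ)/(n:ℝ))^2 * (2*R*((kap d (-((n:ℝ)⁻¹ * ((m:ℝ)-(n:ℝ))))
            * eLpNorm (f n) 2 volume * eLpNorm (f (m-n)) 2 (volume : Measure (Euc d))).toReal))
          = (((m:ℝ)/(n:ℝ))^2 * (2*R)) * ((kap d (-((n:ℝ)⁻¹ * ((m:ℝ)-(n:ℝ))))
            * eLpNorm (f n) 2 volume
            * eLpNorm (f (m-n)) 2 (volume : Measure (Euc d))).toReal) := by ring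
      rw [h1, ENNReal.ofReal_mul (by positivity)]
      calc ENNReal.ofReal (((m:ℝ)/(n:ℝ))^2 * (2*R))
            * ENNReal.ofReal ((kap d (-((n:ℝ)⁻¹ * ((m:ℝ)-(n:ℝ)))) * eLpNorm (f n) 2 volume
              * eLpNorm (f (m-n)) 2 (volume : Measure (Euc d))).toReal)
          ≤ ENNReal.ofReal (((m:ℝ)/(n:ℝ))^2 * (2*R))
            * (kap d (-((n:ℝ)⁻¹ * ((m:ℝ)-(n:ℝ)))) * eLpNorm (f n) 2 volume
              * eLpNorm (f (m-n)) 2 (volume : Measure (Euc d))) :=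
            mul_le_mul_right ENNReal.ofReal_toReal_le _
        _ ≤ ENNReal.ofReal (((m:ℝ)/(n:ℝ))^2 * (2*R))
            * (kap d (-((n:ℝ)⁻¹ * ((m:ℝ)-(n:ℝ)))) * S * S) := by
            gcongr
            · exact hfle n (hmemn m hm n hn).1
            · exact hfle (m-n) (hmemn m hm n hn).2
        _ = ENNReal.ofReal (((m:ℝ)/(n:ℝ))^2 * (2*R))
            * kap d (-((n:ℝ)⁻¹ * ((m:ℝ)-(n:ℝ)))) * S^2 := by
            rw [sq]; ring
    have step3 : ENNReal.ofReal B2 ≤ 2 * ENNReal.ofReal (2*R) * Nind * S := by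
      rw [hB2, ENNReal.ofReal_mul (by norm_num : (0:ℝ) ≤ 2)]
      rw [ENNReal.ofReal_sum_of_nonneg (fun n hn => by
        have := ENNReal.toReal_nonneg (a := eLpNorm (f n) 2 (volume : Measure (Euc d)) * Nind)
        positivity)]
      have hsum : ∑ n ∈ Finset.Icc 1 M,
          ENNReal.ofReal (2*R*((eLpNorm (f n) 2 (volume : Measure (Euc d)) * Nind).toReal))
          ≤ ENNReal.ofReal (2*R) * Nind * S := by
        calc ∑ n ∈ Finset.Icc 1 M,
            ENNReal.ofReal (2*R*((eLpNorm (f n) 2 (volume : Measure (Euc d)) * Nind).toReal))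
            ≤ ∑ n ∈ Finset.Icc 1 M, ENNReal.ofReal (2*R)
              * (eLpNorm (f n) 2 (volume : Measure (Euc d)) * Nind) := by
              refine Finset.sum_le_sum fun n hn => ?_
              rw [ENNReal.ofReal_mul (by positivity)]
              exact mul_le_mul_right ENNReal.ofReal_toReal_le _
          _ = ENNReal.ofReal (2*R) * Nind * S := by
              rw [hS, Finset.mul_sum]
              refine Finset.sum_congr rfl fun n hn => ?_
              ring
      calc ENNReal.ofReal 2 * ∑ n ∈ Finset.Icc 1 M,
          ENNReal.ofReal (2*R*((eLpNorm (f n) 2 (volume : Measure (Euc d)) * Nind).toReal))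
          ≤ ENNReal.ofReal 2 * (ENNReal.ofReal (2*R) * Nind * S) := mul_le_mul_right hsum _
        _ = 2 * ENNReal.ofReal (2*R) * Nind * S := by
            rw [ENNReal.ofReal_ofNat]; ring
    calc eLpNorm (Qtrunc d M R f m) 2 volume
        ≤ ENNReal.ofReal (B1 m) * Nind + ENNReal.ofReal B2 * eLpNorm (f m) 2 volume := step1
      _ ≤ (K m * S^2) * Nind + (2 * ENNReal.ofReal (2*R) * Nind * S) * S := by
          gcongr <;> first
            | exact step2
            | exact step3
            | exact hfle m hm
      _ = (K m * Nind + 2 * ENNReal.ofReal (2*R) * Nind) * S^2 := by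
          rw [sq]; ring
  have hQmem : ∀ m ∈ Finset.Icc 1 M,
      MemLp (Qtrunc d M R f m) 2 (volume : Measure (Euc d)) := by
    intro m hm
    refine ⟨haesm m hm, lt_of_le_of_lt (hQle m hm) ?_⟩
    refine ENNReal.mul_lt_top ?_ (ENNReal.pow_ne_top hS_ne).lt_top
    exact ENNReal.add_lt_top.mpr ⟨ENNReal.mul_lt_top (hK_ne m).lt_top hNind_ne.lt_top,
      ENNReal.mul_lt_top (ENNReal.mul_lt_top (ENNReal.ofNat_ne_top.lt_top)
        ENNReal.ofReal_lt_top) hNind_ne.lt_top⟩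
  refine ⟨fun m hm => ⟨ae_of_all _ fun v =>
    ⟨fun n hn => hint_gain m hm v n hn, fun n hn => hint_loss v n hn⟩, hQmem m hm⟩, ?_⟩
  calc ∑ m ∈ Finset.Icc 1 M, eLpNorm (Qtrunc d M R f m) 2 volume
      ≤ ∑ m ∈ Finset.Icc 1 M, (K m * Nind + 2 * ENNReal.ofReal (2*R) * Nind) * S^2 :=
        Finset.sum_le_sum hQle
    _ = Ctot * S^2 := by rw [hCtot, Finset.sum_mul]
    _ = (Ctot.toNNReal : ℝ≥0∞) * S^2 := by rw [ENNReal.coe_toNNReal hCtot_ne]
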